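/- Let C be a braided monoidal category with braiding β, A a commutative monoid object, V an object of C and X a module over A. Then the morphism (id_V ⊗ μ_X) ∘ (β_{A,V} ⊗ id_X) : (A ⊗ V) ⊗ X ⟶ V ⊗ X coequalizes the two morphisms μ₁, μ₂ defining F(V) ⊗_A X, and the induced morphism F(V) ⊗_A X ⟶ V ⊗ X is an isomorphism in C, with inverse π_{F(V),X} ∘ (ι ⊗ id_V ⊗ id_X). In particular G(F(V) ⊗_A X) ≅ V ⊗ G(X) naturally, and G(F(V)) ≅ A ⊗ V. -/

import Mathlib

open CategoryTheory MonoidalCategory Limits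

universe v u

variable {C : Type u} [Category.{v} C] [MonoidalCategory C] [BraidedCategory C]

/-- The free module `F(V) = A ⊗ V` over a monoid object `A`, with action `μ ⊗ id_V`. -/
@[simps]
def freeMod (A : Mon C) (V : C) : Mod C A.X where
  X := A.X ⊗ V
  mod :=
  { smul := (α_ A.X A.X V).inv ≫ (MonObj.mul (X := A.X) ▷ V)
    one_smul := by
      simp only [selfLeftAction_actionHomLeft,
        selfLeftAction_actionUnitIso]
      rw [associator_inv_naturality_left_assoc, ← comp_whiskerRight, MonObj.one_mul]
      simp
    mul_smul := by
      simp only [selfLeftAction_actionHomLeft,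
        selfLeftAction_actionHomRight,
        selfLeftAction_actionAssocIso, MonoidalCategory.whiskerLeft_comp]
      slice_rhs 3 4 => rw [associator_inv_naturality_middle]
      rw [associator_inv_naturality_left_assoc, ← comp_whiskerRight, MonObj.mul_assoc]
      simp only [comp_whiskerRight, Category.assoc]
      simp }

/-- The first of the two morphisms whose coequalizer is `X ⊗_A Y`, namely `μ_X ⊗ id_Y`. -/
def mapOne {A : Mon C} (X Y : Mod C A.X) : (A.X ⊗ X.X) ⊗ Y.X ⟶ X.X ⊗ Y.X := ModObj.smul (M := A.X) (X := X.X) ▷ Y.X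

/-- The second of the two morphisms whose coequalizer is `X ⊗_A Y`, namely
`(id_X ⊗ μ_Y) ∘ (β_{A,X} ⊗ id_Y)`. -/
def mapTwo {A : Mon C} (X Y : Mod C A.X) : (A.X ⊗ X.X) ⊗ Y.X ⟶ X.X ⊗ Y.X :=
  ((β_ A.X X.X).hom ▷ Y.X) ≫ (α_ X.X A.X Y.X).hom ≫ (X.X ◁ ModObj.smul (M := A.X) (X := Y.X))

variable [HasCoequalizers C]

/-- The underlying object of `X ⊗_A Y`: the coequalizer of `mapOne` and `mapTwo`. -/
noncomputable def tensorQ {A : Mon C} (X Y : Mod C A.X) : C :=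
  coequalizer (mapOne X Y) (mapTwo X Y)

/-- The canonical projection `π_{X,Y} : X ⊗ Y ⟶ X ⊗_A Y`. -/
noncomputable def tensorπ {A : Mon C} (X Y : Mod C A.X) : X.X ⊗ Y.X ⟶ tensorQ X Y :=
  coequalizer.π _ _

/-!
STATEMENT 5: For a commutative monoid object `A`, an object `V` of `C` and a module `X`
over `A`, the morphism `(id_V ⊗ μ_X) ∘ (β_{A,V} ⊗ id_X)` coequalizes the two morphisms
defining `F(V) ⊗_A X`, and the induced morphism `F(V) ⊗_A X ⟶ V ⊗ X` is an isomorphism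
in `C` with inverse `π ∘ (ι ⊗ id_V ⊗ id_X)`; naturally in `V`.  In particular
`G(F(V) ⊗_A X) ≅ V ⊗ G(X)` and `G(F(V)) ≅ A ⊗ V`.
-/

/-- The morphism `(id_V ⊗ μ_X) ∘ (β_{A,V} ⊗ id_X) : (A ⊗ V) ⊗ X ⟶ V ⊗ X`. -/
def projC (A : Mon C) (V : C) (X : Mod C A.X) : (A.X ⊗ V) ⊗ X.X ⟶ V ⊗ X.X :=
  ((β_ A.X V).hom ▷ X.X) ≫ (α_ V A.X X.X).hom ≫ (V ◁ ModObj.smul (M := A.X) (X := X.X))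


section Aux

variable (A : Mon C) (V : C) (X : Mod C A.X)

private lemma aux_coeq (hcomm : (β_ A.X A.X).hom ≫ MonObj.mul (X := A.X) = MonObj.mul (X := A.X)) :
    mapOne (freeMod A V) X ≫ projC A V X = mapTwo (freeMod A V) X ≫ projC A V X := by
  show (((α_ A.X A.X V).inv ≫ (MonObj.mul (X := A.X) ▷ V)) ▷ X.X) ≫ (((β_ A.X V).hom ▷ X.X) ≫ (α_ V A.X X.X).hom ≫ (V ◁ ModObj.smul (M := A.X) (X := X.X))) = (((β_ A.X (A.X ⊗ V)).hom ▷ X.X) ≫ (α_ (A.X ⊗ V) A.X X.X).hom ≫ ((A.X ⊗ V) ◁ ModObj.smul (M := A.X) (X := X.X))) ≫ (((β_ A.X V).hom ▷ X.X) ≫ (α_ V A.X X.X).hom ≫ (V ◁ ModObj.smul (M := A.X) (X := X.X)))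
  conv_lhs => rw [← hcomm]
  simp only [comp_whiskerRight, Category.assoc, BraidedCategory.braiding_tensor_right_hom]
  rw [← comp_whiskerRight_assoc (MonObj.mul (X := A.X) ▷ V) (β_ A.X V).hom,
    BraidedCategory.braiding_naturality_left]
  simp only [comp_whiskerRight, Category.assoc, BraidedCategory.braiding_tensor_left_hom]
  rw [associator_naturality_middle_assoc, ← MonoidalCategory.whiskerLeft_comp,
    ModObj.mul_smul_self]
  rw [whisker_exchange_assoc ((β_ A.X V).hom) (ModObj.smul (M := A.X) (X := X.X))]
  simp only [MonoidalCategory.whiskerLeft_comp, Category.assoc]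
  monoidal

private lemma aux_inv_proj :
    (((λ_ V).inv ≫ (MonObj.one (X := A.X) ▷ V)) ▷ X.X) ≫ projC A V X = 𝟙 (V ⊗ X.X) := by
  simp only [projC, comp_whiskerRight, Category.assoc]
  rw [← comp_whiskerRight_assoc (MonObj.one (X := A.X) ▷ V) (β_ A.X V).hom,
    BraidedCategory.braiding_naturality_left]
  simp only [comp_whiskerRight, Category.assoc]
  rw [associator_naturality_middle_assoc, ← MonoidalCategory.whiskerLeft_comp, ModObj.one_smul_self]
  rw [braiding_tensorUnit_left]
  simp only [comp_whiskerRight, Category.assoc]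
  coherence

private lemma aux_nat (V' : C) (f : V' ⟶ V) :
    ((A.X ◁ f) ▷ X.X) ≫ projC A V X = projC A V' X ≫ (f ▷ X.X) := by
  simp only [projC]
  rw [← comp_whiskerRight_assoc, BraidedCategory.braiding_naturality_right,
    comp_whiskerRight, Category.assoc, associator_naturality_left_assoc,
    ← whisker_exchange]
  simp

private lemma aux_d_mapTwo :
    ((A.X ◁ ((λ_ V).inv ≫ (MonObj.one (X := A.X) ▷ V))) ▷ X.X) ≫ mapTwo (freeMod A V) X
      = projC A V X ≫ (((λ_ V).inv ≫ (MonObj.one (X := A.X) ▷ V)) ▷ X.X) := by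
  show ((A.X ◁ ((λ_ V).inv ≫ (MonObj.one (X := A.X) ▷ V))) ▷ X.X) ≫ (((β_ A.X (A.X ⊗ V)).hom ▷ X.X) ≫ (α_ (A.X ⊗ V) A.X X.X).hom ≫ ((A.X ⊗ V) ◁ ModObj.smul (M := A.X) (X := X.X))) = projC A V X ≫ ((((λ_ V).inv ≫ (MonObj.one (X := A.X) ▷ V))) ▷ X.X)
  rw [← comp_whiskerRight_assoc, BraidedCategory.braiding_naturality_right]
  simp only [projC, comp_whiskerRight, Category.assoc]
  rw [associator_naturality_left_assoc, ← whisker_exchange]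
  simp

private lemma aux_d_mapOne :
    ((A.X ◁ ((λ_ V).inv ≫ (MonObj.one (X := A.X) ▷ V))) ▷ X.X) ≫ mapOne (freeMod A V) X
      = 𝟙 ((A.X ⊗ V) ⊗ X.X) := by
  show ((A.X ◁ ((λ_ V).inv ≫ (MonObj.one (X := A.X) ▷ V))) ▷ X.X) ≫ (((α_ A.X A.X V).inv ≫ (MonObj.mul (X := A.X) ▷ V)) ▷ X.X) = 𝟙 ((A.X ⊗ V) ⊗ X.X)
  rw [← comp_whiskerRight]
  have h1 : (A.X ◁ ((λ_ V).inv ≫ (MonObj.one (X := A.X) ▷ V))) ≫ (α_ A.X A.X V).inv ≫ (MonObj.mul (X := A.X) ▷ V)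
      = 𝟙 (A.X ⊗ V) := by
    simp only [MonoidalCategory.whiskerLeft_comp, Category.assoc]
    rw [associator_inv_naturality_middle_assoc, ← comp_whiskerRight, MonObj.mul_one]
    coherence
  rw [h1, id_whiskerRight]

end Aux

theorem free_tensor_module_forget
    (A : Mon C) (hcomm : (β_ A.X A.X).hom ≫ MonObj.mul (X := A.X) = MonObj.mul (X := A.X)) (V : C) (X : Mod C A.X) :
    ∃ h : mapOne (freeMod A V) X ≫ projC A V X = mapTwo (freeMod A V) X ≫ projC A V X,
      -- the induced morphism `F(V) ⊗_A X ⟶ V ⊗ X` is an isomorphism with inverse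
      -- `π_{F(V),X} ∘ (ι ⊗ id_V ⊗ id_X)` ...
      (coequalizer.desc (projC A V X) h
          ≫ ((((λ_ V).inv ≫ (MonObj.one (X := A.X) ▷ V)) ▷ X.X) ≫ tensorπ (freeMod A V) X)
        = 𝟙 (tensorQ (freeMod A V) X)) ∧
      (((((λ_ V).inv ≫ (MonObj.one (X := A.X) ▷ V)) ▷ X.X) ≫ tensorπ (freeMod A V) X)
          ≫ coequalizer.desc (projC A V X) h = 𝟙 (V ⊗ X.X)) ∧
      -- ... naturally in `V`
      (∀ (V' : C) (f : V' ⟶ V),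
          ((A.X ◁ f) ▷ X.X) ≫ projC A V X = projC A V' X ≫ (f ▷ X.X)) := by
  refine ⟨aux_coeq A V X hcomm, ?_, ?_, fun V' f => aux_nat A V X V' f⟩
  · apply coequalizer.hom_ext
    show coequalizer.π (mapOne (freeMod A V) X) (mapTwo (freeMod A V) X) ≫ _ = coequalizer.π (mapOne (freeMod A V) X) (mapTwo (freeMod A V) X) ≫ 𝟙 (coequalizer (mapOne (freeMod A V) X) (mapTwo (freeMod A V) X))
    erw [coequalizer.π_desc_assoc, Category.comp_id]
    show projC A V X ≫ (((λ_ V).inv ≫ (MonObj.one (X := A.X) ▷ V)) ▷ X.X) ≫ coequalizer.π (mapOne (freeMod A V) X) (mapTwo (freeMod A V) X)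
      = coequalizer.π (mapOne (freeMod A V) X) (mapTwo (freeMod A V) X)
    erw [← Category.assoc, ← aux_d_mapTwo A V X, Category.assoc, ← coequalizer.condition,
      ← Category.assoc, aux_d_mapOne A V X, Category.id_comp]
    rfl
  · show (_ ≫ coequalizer.π (mapOne (freeMod A V) X) (mapTwo (freeMod A V) X)) ≫ _ = _
    erw [Category.assoc, coequalizer.π_desc, aux_inv_proj A V X]
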